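/- There does not exist, for each q ∈ [0,1], a function f_q : [0,1] × [0,1] → ℝ, a strictly monotone increasing bijection ζ : ℝ≥0 → ℝ≥0 with ζ(0) = 0, and an absolute constant C > 0, such that for every T ∈ ℕ, every q ∈ [0,1], and all sequences p₁,…,p_T and y₁,…,y_T in [0,1], the ℓ₂-quantile calibration error Σ_p n_p·(q − (1/n_p)·Σ_t 1[p_t = p, y_t ≤ p])² is at most ζ(sup over swap functions ν : [0,1]→[0,1] of Σ_t (f_q(p_t, y_t) − f_q(ν(p_t), y_t))) + C. -/

import Mathlib

open scoped Classical

theorem stmt_16 :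
    ¬ ∃ (f : ℝ → ℝ → ℝ → ℝ) (ζ : ℝ → ℝ) (C : ℝ),
      StrictMonoOn ζ (Set.Ici 0) ∧ Set.BijOn ζ (Set.Ici 0) (Set.Ici 0) ∧ ζ 0 = 0 ∧ 0 < C ∧
      ∀ (T : ℕ) (q : ℝ), q ∈ Set.Icc (0 : ℝ) 1 →
        ∀ (p y : Fin T → ℝ), (∀ t, p t ∈ Set.Icc (0 : ℝ) 1) →
          (∀ t, y t ∈ Set.Icc (0 : ℝ) 1) →
          (∑ v ∈ Finset.image p Finset.univ,
            (∑ t, if p t = v then (1 : ℝ) else 0) *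
              (q - (1 / ∑ t, if p t = v then (1 : ℝ) else 0) *
                ∑ t, if p t = v ∧ y t ≤ v then (1 : ℝ) else 0) ^ 2)
          ≤ ζ (sSup {s : ℝ | ∃ ν : ℝ → ℝ,
                Set.MapsTo ν (Set.Icc 0 1) (Set.Icc 0 1) ∧
                s = ∑ t, (f q (p t) (y t) - f q (ν (p t)) (y t))}) + C := by
  rintro ⟨f, ζ, C, hmono, hbij, hζ0, hC, h⟩
  set g : ℝ → ℝ := fun v => f (1/2) v 1 with hg
  have hζ1 : 0 < ζ 1 := by
    have := hmono (by norm_num : (0:ℝ) ∈ Set.Ici 0) (by norm_num : (1:ℝ) ∈ Set.Ici 0)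
      (by norm_num)
    rwa [hζ0] at this
  obtain ⟨T, hT⟩ := exists_nat_gt (4 * (ζ 1 + C))
  have hT0 : 0 < T := by
    have : (0:ℝ) < (T:ℝ) := by linarith
    exact_mod_cast this
  have hTc : (0:ℝ) < T := by exact_mod_cast hT0
  -- choose P
  obtain ⟨P, hP, hsup⟩ : ∃ P ∈ Set.Icc (0:ℝ) 1,
      ζ (sSup {s : ℝ | ∃ ν : ℝ → ℝ, Set.MapsTo ν (Set.Icc 0 1) (Set.Icc 0 1) ∧
          s = ∑ _t : Fin T, (g P - g (ν P))}) ≤ ζ 1 := by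
    by_cases hbdd : BddBelow (g '' Set.Icc 0 1)
    · -- bounded below case
      set m := sInf (g '' Set.Icc 0 1) with hm
      have hne : (g '' Set.Icc 0 1).Nonempty := ⟨g 0, ⟨0, by norm_num, rfl⟩⟩
      obtain ⟨a, ⟨P, hP, rfl⟩, ha⟩ := exists_lt_of_csInf_lt hne
        (lt_add_of_pos_right m (by positivity : (0:ℝ) < 1/T))
      refine ⟨P, hP, ?_⟩
      set A := {s : ℝ | ∃ ν : ℝ → ℝ, Set.MapsTo ν (Set.Icc 0 1) (Set.Icc 0 1) ∧
          s = ∑ _t : Fin T, (g P - g (ν P))} with hA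
      have hmemA : ∀ s ∈ A, s ≤ 1 := by
        rintro s ⟨ν, hν, rfl⟩
        have hνP : g (ν P) ∈ g '' Set.Icc 0 1 := ⟨ν P, hν hP, rfl⟩
        have h1 : m ≤ g (ν P) := csInf_le hbdd hνP
        have : (∑ _t : Fin T, (g P - g (ν P))) = (T:ℝ) * (g P - g (ν P)) := by
          simp [Finset.sum_const, mul_comm]
          ring
        rw [this]
        have hd : g P - g (ν P) ≤ 1/T := by linarith
        calc (T:ℝ) * (g P - g (ν P)) ≤ (T:ℝ) * (1/T) := by
              exact mul_le_mul_of_nonneg_left hd (le_of_lt hTc)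
          _ = 1 := by field_simp
      have h0A : (0:ℝ) ∈ A := by
        refine ⟨fun _ => P, fun x _ => hP, ?_⟩
        simp
      have hbddA : BddAbove A := ⟨1, fun s hs => hmemA s hs⟩
      have hsup0 : 0 ≤ sSup A := le_csSup hbddA h0A
      have hsup1 : sSup A ≤ 1 := csSup_le ⟨0, h0A⟩ hmemA
      exact hmono.monotoneOn (Set.mem_Ici.mpr hsup0) (by norm_num) hsup1
    · -- unbounded below case
      refine ⟨0, by norm_num, ?_⟩
      set A := {s : ℝ | ∃ ν : ℝ → ℝ, Set.MapsTo ν (Set.Icc 0 1) (Set.Icc 0 1) ∧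
          s = ∑ _t : Fin T, (g (0:ℝ) - g (ν 0))} with hA
      have hnb : ¬ BddAbove A := by
        rintro ⟨M, hM⟩
        rw [not_bddBelow_iff] at hbdd
        obtain ⟨x, ⟨v, hv, rfl⟩, hx⟩ := hbdd (g 0 - (|M| + 1))
        have hmem : (∑ _t : Fin T, (g (0:ℝ) - g v)) ∈ A := by
          refine ⟨fun _ => v, fun x _ => hv, rfl⟩
        have hle := hM hmem
        have hsum : (∑ _t : Fin T, (g (0:ℝ) - g v)) = (T:ℝ) * (g 0 - g v) := by
          simp [Finset.sum_const, mul_comm]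
          ring
        rw [hsum] at hle
        have hd : |M| + 1 < g 0 - g v := by linarith
        have hT1 : (1:ℝ) ≤ (T:ℝ) := by exact_mod_cast hT0
        nlinarith [abs_nonneg M, le_abs_self M]
      rw [Real.sSup_of_not_bddAbove hnb, hζ0]
      exact le_of_lt hζ1
  -- specialize h
  have hmain := h T (1/2) (by norm_num) (fun _ => P) (fun _ => 1)
    (fun _ => hP) (fun _ => by norm_num)
  -- compute LHS
  have himg : Finset.image (fun _ : Fin T => P) Finset.univ = {P} :=
    Finset.image_const (Finset.univ_nonempty_iff.mpr ⟨⟨0, hT0⟩⟩) P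
  rw [himg, Finset.sum_singleton] at hmain
  have hn : (∑ _t : Fin T, (1:ℝ)) = (T:ℝ) := by simp
  have hcount : (∑ t : Fin T, if P = P ∧ (1:ℝ) ≤ P then (1:ℝ) else 0)
      = if (1:ℝ) ≤ P then (T:ℝ) else 0 := by
    by_cases h1 : (1:ℝ) ≤ P <;> simp [h1]
  have hn' : (∑ _t : Fin T, if P = P then (1:ℝ) else 0) = (T:ℝ) := by simp
  rw [hn', hcount] at hmain
  have hlhs : (T:ℝ) * ((1:ℝ)/2 - (1/(T:ℝ)) * if (1:ℝ) ≤ P then (T:ℝ) else 0) ^ 2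
      = (T:ℝ)/4 := by
    by_cases h1 : (1:ℝ) ≤ P
    · rw [if_pos h1]
      field_simp
      ring
    · rw [if_neg h1]
      ring
  rw [hlhs] at hmain
  have hAeq : {s : ℝ | ∃ ν : ℝ → ℝ, Set.MapsTo ν (Set.Icc 0 1) (Set.Icc 0 1) ∧
        s = ∑ _t : Fin T, (f (1/2) P 1 - f (1/2) (ν P) 1)}
      = {s : ℝ | ∃ ν : ℝ → ℝ, Set.MapsTo ν (Set.Icc 0 1) (Set.Icc 0 1) ∧
        s = ∑ _t : Fin T, (g P - g (ν P))} := rfl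
  rw [hAeq] at hmain
  have : (T:ℝ)/4 ≤ ζ 1 + C := le_trans hmain (by linarith)
  linarith
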